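/- Let n ≥ 1 be an integer and let h₀ : ℝ → ℂ be n times continuously differentiable, supported in (0, 2], and constant on (0, 1]. Let 0 < A ≤ B and set h(t) = h₀(t/B) − h₀(t/A) for t > 0. Then for every s ∈ ℂ with Re(s) ≥ 0: | ∫_{0}^{∞} h(t) t^{s−1} dt | ≤ log(B/A) · (sup_{t ∈ [1,2]} |h₀^{(n)}(t)|) · B^{Re(s)} · ( ∫_{1}^{2} t^{Re(s)+n−1} dt ) / ∏_{j=1}^{n−1} |s + j| (for n = 1 the empty product equals 1). -/

import Mathlib

open MeasureTheory Complex Set Filter Topology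

section Aux

private lemma aux_hasDerivAt_cpow (w : ℂ) {x : ℝ} (hx : x ≠ 0) :
    HasDerivAt (fun y : ℝ => (y : ℂ) ^ w) (w * (x : ℂ) ^ (w - 1)) x := by
  rcases eq_or_ne w 0 with rfl | hw
  · simpa using (hasDerivAt_const x (1 : ℂ)).congr_of_eventuallyEq
      (Eventually.of_forall fun y => by simp)
  · have h := hasDerivAt_ofReal_cpow_const' hx (r := w - 1)
      (by intro hcon; apply hw; linear_combination hcon)
    rw [sub_add_cancel] at h
    have h2 := h.const_mul w
    refine h2.congr_of_eventuallyEq (Eventually.of_forall fun y => ?_)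
    field_simp

private lemma aux_cpow_contOn' (w : ℂ) {a b : ℝ} (ha : 0 < a) (hb : 0 < b) :
    ContinuousOn (fun x : ℝ => (x : ℂ) ^ w) (Set.uIcc a b) := by
  apply ContinuousOn.cpow Complex.continuous_ofReal.continuousOn continuousOn_const
  intro x hx
  left
  have h1 : min a b ≤ x := hx.1
  have h2 : 0 < min a b := lt_min ha hb
  simp only [Complex.ofReal_re]
  linarith

private lemma aux_vanish (n : ℕ) (h₀ : ℝ → ℂ) (hCD : ContDiff ℝ (n : ℕ∞) h₀)
    (hsupp : ∀ t : ℝ, t ∉ Set.Ioc (0 : ℝ) 2 → h₀ t = 0)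
    (hconst : ∃ c : ℂ, ∀ t ∈ Set.Ioc (0 : ℝ) 1, h₀ t = c) :
    ∀ x : ℝ, x ∉ Set.Ioo (1 : ℝ) 2 → h₀ x = 0 := by
  obtain ⟨c, hc⟩ := hconst
  have hcont : Continuous h₀ := hCD.continuous
  have hc0 : c = 0 := by
    have h1 : Tendsto h₀ (𝓝[>] (0:ℝ)) (𝓝 (h₀ 0)) :=
      (hcont.tendsto 0).mono_left nhdsWithin_le_nhds
    have he : h₀ =ᶠ[𝓝[>] (0:ℝ)] fun _ => c := by
      filter_upwards [Ioo_mem_nhdsGT_of_mem (Set.mem_Ico.mpr ⟨le_refl (0:ℝ), one_pos⟩)] with t ht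
      exact hc t ⟨ht.1, ht.2.le⟩
    have h2 : Tendsto h₀ (𝓝[>] (0:ℝ)) (𝓝 c) := tendsto_const_nhds.congr' he.symm
    have := tendsto_nhds_unique h2 h1
    rw [this, hsupp 0 (by simp)]
  have h20 : h₀ 2 = 0 := by
    have h1 : Tendsto h₀ (𝓝[>] (2:ℝ)) (𝓝 (h₀ 2)) :=
      (hcont.tendsto 2).mono_left nhdsWithin_le_nhds
    have he : h₀ =ᶠ[𝓝[>] (2:ℝ)] fun _ => 0 := by
      filter_upwards [self_mem_nhdsWithin] with t ht
      exact hsupp t fun hm => absurd hm.2 (not_le.mpr ht)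
    exact tendsto_nhds_unique h1 (tendsto_const_nhds.congr' he.symm)
  intro x hx
  rcases le_or_gt x 1 with h1 | h1
  · rcases le_or_gt x 0 with h0 | h0
    · exact hsupp x fun hm => absurd hm.1 (not_lt.mpr h0)
    · rw [hc x ⟨h0, h1⟩, hc0]
  · have h2 : 2 ≤ x := by
      by_contra h
      exact hx ⟨h1, not_le.mp h⟩
    rcases eq_or_lt_of_le h2 with h2e | h2'
    · rw [← h2e]; exact h20
    · exact hsupp x fun hm => absurd hm.2 (not_le.mpr h2')

private lemma aux_end (n k : ℕ) (h₀ : ℝ → ℂ) (hCD : ContDiff ℝ (n : ℕ∞) h₀) (hk : k ≤ n)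
    (hz : ∀ x : ℝ, x ∉ Set.Ioo (1 : ℝ) 2 → h₀ x = 0) :
    iteratedDeriv k h₀ 1 = 0 ∧ iteratedDeriv k h₀ 2 = 0 := by
  have hcontk : Continuous (iteratedDeriv k h₀) :=
    hCD.continuous_iteratedDeriv k (by exact_mod_cast hk)
  have hlt : ∀ x : ℝ, x < 1 → iteratedDeriv k h₀ x = 0 := by
    intro x hx
    have he : h₀ =ᶠ[𝓝 x] fun _ => (0:ℂ) := by
      filter_upwards [Iio_mem_nhds hx] with t ht
      exact hz t fun hm => absurd hm.1 (not_lt.mpr ht.le)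
    rw [he.iteratedDeriv_eq k]
    simp [iteratedDeriv, iteratedFDeriv_zero_fun]
  have hgt : ∀ x : ℝ, 2 < x → iteratedDeriv k h₀ x = 0 := by
    intro x hx
    have he : h₀ =ᶠ[𝓝 x] fun _ => (0:ℂ) := by
      filter_upwards [Ioi_mem_nhds hx] with t ht
      exact hz t fun hm => absurd hm.2 (not_lt.mpr (le_of_lt ht))
    rw [he.iteratedDeriv_eq k]
    simp [iteratedDeriv, iteratedFDeriv_zero_fun]
  constructor
  · have h1 : Tendsto (iteratedDeriv k h₀) (𝓝[<] (1:ℝ)) (𝓝 (iteratedDeriv k h₀ 1)) :=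
      (hcontk.tendsto 1).mono_left nhdsWithin_le_nhds
    have h2 : Tendsto (iteratedDeriv k h₀) (𝓝[<] (1:ℝ)) (𝓝 0) := by
      refine tendsto_const_nhds.congr' ?_
      filter_upwards [self_mem_nhdsWithin] with t ht
      exact (hlt t ht).symm
    exact tendsto_nhds_unique h1 h2
  · have h1 : Tendsto (iteratedDeriv k h₀) (𝓝[>] (2:ℝ)) (𝓝 (iteratedDeriv k h₀ 2)) :=
      (hcontk.tendsto 2).mono_left nhdsWithin_le_nhds
    have h2 : Tendsto (iteratedDeriv k h₀) (𝓝[>] (2:ℝ)) (𝓝 0) := by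
      refine tendsto_const_nhds.congr' ?_
      filter_upwards [self_mem_nhdsWithin] with t ht
      exact (hgt t ht).symm
    exact tendsto_nhds_unique h1 h2

private lemma aux_ibp (n : ℕ) (h₀ : ℝ → ℂ) (hCD : ContDiff ℝ (n : ℕ∞) h₀)
    (hend : ∀ k ≤ n, iteratedDeriv k h₀ 1 = 0 ∧ iteratedDeriv k h₀ 2 = 0) (s : ℂ) :
    ∀ k, k ≤ n → (∏ j ∈ Finset.range k, (s + j)) * (∫ x in (1:ℝ)..2, h₀ x * (x:ℂ)^(s-1))
      = (-1)^k * ∫ x in (1:ℝ)..2, iteratedDeriv k h₀ x * (x:ℂ)^(s - 1 + k) := by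
  intro k
  induction k with
  | zero => intro _; simp
  | succ k ih =>
    intro hk
    have hkn : k < n := Nat.lt_of_succ_le hk
    have ihk := ih (le_of_lt hkn)
    have hu : ∀ x ∈ Set.uIcc (1:ℝ) 2, HasDerivAt (iteratedDeriv k h₀)
        (iteratedDeriv (k+1) h₀ x) x := by
      intro x _
      rw [iteratedDeriv_succ]
      exact (hCD.differentiable_iteratedDeriv k (by exact_mod_cast hkn) x).hasDerivAt
    have hv : ∀ x ∈ Set.uIcc (1:ℝ) 2, HasDerivAt (fun y : ℝ => (y:ℂ)^(s+k))
        ((s+k) * (x:ℂ)^(s+k-1)) x := by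
      intro x hx
      refine aux_hasDerivAt_cpow (s+k) ?_
      rw [Set.uIcc_of_le (by norm_num : (1:ℝ) ≤ 2)] at hx
      exact ne_of_gt (lt_of_lt_of_le one_pos hx.1)
    have hu' : IntervalIntegrable (iteratedDeriv (k+1) h₀) volume 1 2 :=
      (hCD.continuous_iteratedDeriv (k+1) (by exact_mod_cast hk)).intervalIntegrable 1 2
    have hv' : IntervalIntegrable (fun x : ℝ => (s+k) * (x:ℂ)^(s+k-1)) volume 1 2 :=
      (((aux_cpow_contOn' (s+k-1) one_pos two_pos).const_smul ((s+k) : ℂ)).intervalIntegrable)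
    have ibp := intervalIntegral.integral_mul_deriv_eq_deriv_mul hu hv hu' hv'
    rw [(hend k (le_of_lt hkn)).1, (hend k (le_of_lt hkn)).2, zero_mul, zero_mul,
      sub_zero, zero_sub] at ibp
    have hpull : ∫ x in (1:ℝ)..2, iteratedDeriv k h₀ x * ((s+k) * (x:ℂ)^(s+k-1))
        = (s+k) * ∫ x in (1:ℝ)..2, iteratedDeriv k h₀ x * (x:ℂ)^(s-1+k) := by
      rw [← intervalIntegral.integral_const_mul]
      apply intervalIntegral.integral_congr
      intro x _
      have : s + (k:ℂ) - 1 = s - 1 + k := by ring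
      rw [this]; ring
    rw [hpull] at ibp
    have hstep : (s+k) * (∫ x in (1:ℝ)..2, iteratedDeriv k h₀ x * (x:ℂ)^(s-1+k))
        = - ∫ x in (1:ℝ)..2, iteratedDeriv (k+1) h₀ x * (x:ℂ)^(s-1+(k+1:ℕ)) := by
      rw [ibp]
      congr 1
      apply intervalIntegral.integral_congr
      intro x _
      have : s + (k:ℂ) = s - 1 + ((k:ℕ)+1:ℕ) := by push_cast; ring
      rw [← this]
    calc (∏ j ∈ Finset.range (k+1), (s + j)) * (∫ x in (1:ℝ)..2, h₀ x * (x:ℂ)^(s-1))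
        = (s + k) * ((∏ j ∈ Finset.range k, (s + j)) * ∫ x in (1:ℝ)..2, h₀ x * (x:ℂ)^(s-1)) := by
          rw [Finset.prod_range_succ]; ring
      _ = (s + k) * ((-1)^k * ∫ x in (1:ℝ)..2, iteratedDeriv k h₀ x * (x:ℂ)^(s-1+k)) := by
          rw [ihk]
      _ = (-1)^k * ((s+k) * ∫ x in (1:ℝ)..2, iteratedDeriv k h₀ x * (x:ℂ)^(s-1+k)) := by ring
      _ = (-1)^k * (- ∫ x in (1:ℝ)..2, iteratedDeriv (k+1) h₀ x * (x:ℂ)^(s-1+(k+1:ℕ))) := by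
          rw [hstep]
      _ = (-1)^(k+1) * ∫ x in (1:ℝ)..2, iteratedDeriv (k+1) h₀ x * (x:ℂ)^(s-1+(k+1:ℕ)) := by
          ring

private lemma aux_int (h₀ : ℝ → ℂ) (hcont : Continuous h₀)
    (hz : ∀ x : ℝ, x ∉ Set.Ioo (1 : ℝ) 2 → h₀ x = 0) (s : ℂ) {C : ℝ} (hC : 0 < C) :
    Integrable (fun t : ℝ => h₀ (t / C) * (t:ℂ)^(s-1)) := by
  have hsub : Function.support (fun t : ℝ => h₀ (t / C) * (t:ℂ)^(s-1)) ⊆ Set.Icc C (2*C) := by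
    intro t ht
    rw [Function.mem_support] at ht
    by_contra htc
    apply ht
    have : t / C ∉ Set.Ioo (1:ℝ) 2 := by
      intro ⟨hl, hr⟩
      rw [lt_div_iff₀ hC, one_mul] at hl
      rw [div_lt_iff₀ hC] at hr
      exact htc ⟨hl.le, by linarith⟩
    rw [hz _ this, zero_mul]
  rw [← integrableOn_iff_integrable_of_support_subset hsub]
  apply ContinuousOn.integrableOn_compact isCompact_Icc
  apply ContinuousOn.mul (hcont.comp (continuous_id.div_const C)).continuousOn
  have h2 : Set.Icc C (2*C) ⊆ Set.uIcc C (2*C) := by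
    rw [Set.uIcc_of_le (by linarith)]
  exact (aux_cpow_contOn' (s-1) hC (by linarith)).mono h2

private lemma aux_toInterval (h₀ : ℝ → ℂ)
    (hz : ∀ x : ℝ, x ∉ Set.Ioo (1 : ℝ) 2 → h₀ x = 0) (s : ℂ) :
    (∫ x in Set.Ioi (0:ℝ), h₀ x * (x:ℂ)^(s-1)) = ∫ x in (1:ℝ)..2, h₀ x * (x:ℂ)^(s-1) := by
  have hz' : ∀ x : ℝ, x ∉ Set.Ioo (1:ℝ) 2 → h₀ x * (x:ℂ)^(s-1) = 0 := by
    intro x hx; rw [hz x hx, zero_mul]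
  have e1 : (∫ x in Set.Ioi (0:ℝ), h₀ x * (x:ℂ)^(s-1)) = ∫ x : ℝ, h₀ x * (x:ℂ)^(s-1) :=
    setIntegral_eq_integral_of_forall_compl_eq_zero
      (fun x hx => hz' x (fun hm => hx (lt_trans one_pos hm.1)))
  have e2 : (∫ x in (1:ℝ)..2, h₀ x * (x:ℂ)^(s-1)) = ∫ x : ℝ, h₀ x * (x:ℂ)^(s-1) := by
    apply intervalIntegral.integral_eq_integral_of_support_subset
    intro x hx
    rcases Classical.em (x ∈ Set.Ioo (1:ℝ) 2) with h | h
    · exact ⟨h.1, h.2.le⟩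
    · exact absurd (hz' x h) hx
  rw [e1, e2]

private lemma aux_scale (h₀ : ℝ → ℂ) (s : ℂ) {C : ℝ} (hC : 0 < C) :
    (∫ t in Set.Ioi (0:ℝ), h₀ (t / C) * (t:ℂ)^(s-1))
      = (C:ℂ)^s * ∫ x in Set.Ioi (0:ℝ), h₀ x * (x:ℂ)^(s-1) := by
  have h1 := MeasureTheory.integral_comp_mul_left_Ioi
    (fun t : ℝ => h₀ (t / C) * (t:ℂ)^(s-1)) 0 hC
  rw [mul_zero] at h1
  have h2 : (∫ x in Set.Ioi (0:ℝ), (fun t : ℝ => h₀ (t / C) * (t:ℂ)^(s-1)) (C * x))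
      = (C:ℂ)^(s-1) * ∫ x in Set.Ioi (0:ℝ), h₀ x * (x:ℂ)^(s-1) := by
    rw [← MeasureTheory.integral_const_mul]
    apply setIntegral_congr_fun measurableSet_Ioi
    intro x hx
    show h₀ (C * x / C) * ((C * x : ℝ):ℂ)^(s-1) = (C:ℂ)^(s-1) * (h₀ x * (x:ℂ)^(s-1))
    rw [mul_div_cancel_left₀ _ hC.ne', Complex.ofReal_mul,
      mul_cpow_ofReal_nonneg hC.le (le_of_lt hx) (s-1)]
    ring
  rw [h2] at h1
  have h3 := congrArg (fun z => (C:ℝ) • z) h1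
  simp only [smul_smul, mul_inv_cancel₀ hC.ne', one_smul] at h3
  have hC0 : (C:ℂ) ≠ 0 := by exact_mod_cast hC.ne'
  have hpow : (C:ℂ) * (C:ℂ)^(s-1) = (C:ℂ)^s := by
    nth_rewrite 1 [← Complex.cpow_one (C:ℂ)]
    rw [← Complex.cpow_add _ _ hC0]
    norm_num
  rw [show (∫ t in Set.Ioi (0:ℝ), h₀ (t / C) * (t:ℂ)^(s-1))
      = ∫ x in Set.Ioi (0:ℝ), (fun t : ℝ => h₀ (t / C) * (t:ℂ)^(s-1)) x from rfl, ← h3,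
    real_smul, ← mul_assoc, hpow]

end Aux

theorem stmt19 (n : ℕ) (hn : 1 ≤ n) (h₀ : ℝ → ℂ) (hCD : ContDiff ℝ (n : ℕ∞) h₀)
    (hsupp : ∀ t : ℝ, t ∉ Set.Ioc (0 : ℝ) 2 → h₀ t = 0)
    (hconst : ∃ c : ℂ, ∀ t ∈ Set.Ioc (0 : ℝ) 1, h₀ t = c)
    (A B : ℝ) (hA : 0 < A) (hAB : A ≤ B) (s : ℂ) (hs : 0 ≤ s.re) :
    ‖∫ t in Set.Ioi (0 : ℝ), (h₀ (t / B) - h₀ (t / A)) * (t : ℂ) ^ (s - 1)‖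
      ≤ Real.log (B / A) * (⨆ t : Set.Icc (1 : ℝ) 2, ‖iteratedDeriv n h₀ t‖) *
          B ^ s.re * (∫ t in (1 : ℝ)..2, t ^ (s.re + n - 1)) /
          ∏ j ∈ Finset.Icc 1 (n - 1), ‖s + (j : ℂ)‖ := by
  have hB : 0 < B := lt_of_lt_of_le hA hAB
  have hz := aux_vanish n h₀ hCD hsupp hconst
  have hcont : Continuous h₀ := hCD.continuous
  set Csup := ⨆ t : Set.Icc (1 : ℝ) 2, ‖iteratedDeriv n h₀ t‖ with hCsup
  set P := ∏ j ∈ Finset.Icc 1 (n - 1), ‖s + (j : ℂ)‖ with hP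
  set J := ∫ x in (1:ℝ)..2, h₀ x * (x:ℂ)^(s-1) with hJ
  -- main factorization
  have main : (∫ t in Set.Ioi (0 : ℝ), (h₀ (t / B) - h₀ (t / A)) * (t : ℂ) ^ (s - 1))
      = ((B:ℂ)^s - (A:ℂ)^s) * J := by
    have hsplit : (∫ t in Set.Ioi (0 : ℝ), (h₀ (t / B) - h₀ (t / A)) * (t : ℂ) ^ (s - 1))
        = (∫ t in Set.Ioi (0:ℝ), h₀ (t / B) * (t:ℂ)^(s-1))
          - ∫ t in Set.Ioi (0:ℝ), h₀ (t / A) * (t:ℂ)^(s-1) := by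
      rw [← integral_sub ((aux_int h₀ hcont hz s hB).integrableOn)
        ((aux_int h₀ hcont hz s hA).integrableOn)]
      simp only [sub_mul]
    rw [hsplit, aux_scale h₀ s hB, aux_scale h₀ s hA, aux_toInterval h₀ hz s, ← hJ]
    ring
  -- nonnegativity facts
  have hlog : 0 ≤ Real.log (B / A) := Real.log_nonneg ((one_le_div hA).mpr hAB)
  have hCs : 0 ≤ Csup := Real.iSup_nonneg fun t => norm_nonneg _
  have hBp : 0 ≤ B ^ s.re := Real.rpow_nonneg hB.le _
  have hIntNN : 0 ≤ ∫ t in (1:ℝ)..2, t ^ (s.re + n - 1) :=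
    intervalIntegral.integral_nonneg one_le_two
      (fun x hx => Real.rpow_nonneg (by linarith [hx.1]) _)
  have hPnn : 0 ≤ P := Finset.prod_nonneg fun j _ => norm_nonneg _
  rcases eq_or_ne s 0 with rfl | hs0
  · rw [main]
    simp only [Complex.cpow_zero, sub_self, zero_mul, norm_zero]
    exact div_nonneg (mul_nonneg (mul_nonneg (mul_nonneg hlog hCs) hBp) hIntNN) hPnn
  -- s ≠ 0 case
  have hS : 0 < ‖s‖ := norm_pos_iff.mpr hs0
  have hPpos : 0 < P := by
    apply Finset.prod_pos
    intro j hj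
    apply norm_pos_iff.mpr
    intro hcon
    have hj1 : 1 ≤ j := (Finset.mem_Icc.mp hj).1
    have h1 := congrArg Complex.re hcon
    simp only [Complex.add_re, Complex.natCast_re, Complex.zero_re] at h1
    have h2 : (1:ℝ) ≤ (j:ℝ) := by exact_mod_cast hj1
    linarith
  -- product identity
  have hIcc : Finset.Icc 1 (n-1) = Finset.Ico 1 n := by
    rw [← Finset.Ico_add_one_right_eq_Icc]
    congr 1
    omega
  have hprodid : (∏ j ∈ Finset.range n, ‖s + j‖) = ‖s‖ * P := by
    rw [hP, hIcc, Finset.range_eq_Ico,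
      Finset.prod_eq_prod_Ico_succ_bot hn (fun j => ‖s + j‖)]
    simp
  set In := ∫ x in (1:ℝ)..2, iteratedDeriv n h₀ x * (x:ℂ)^(s-1+n) with hIn
  have hclaim := aux_ibp n h₀ hCD (fun k hk => aux_end n k h₀ hCD hk hz) s n le_rfl
  have hJnorm : (∏ j ∈ Finset.range n, ‖s + j‖) * ‖J‖ = ‖In‖ := by
    have h := congrArg norm hclaim
    simpa [norm_mul, norm_prod, norm_pow, norm_neg] using h
  have hJval : ‖J‖ = ‖In‖ / (‖s‖ * P) := by
    rw [eq_div_iff (ne_of_gt (mul_pos hS hPpos)), ← hprodid, mul_comm, ← hJnorm]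
  have hcontn : Continuous (iteratedDeriv n h₀) :=
    hCD.continuous_iteratedDeriv n (by exact_mod_cast le_refl n)
  have hbdd : BddAbove (Set.range fun t : Set.Icc (1:ℝ) 2 => ‖iteratedDeriv n h₀ t‖) := by
    have himg : BddAbove ((fun x => ‖iteratedDeriv n h₀ x‖) '' Set.Icc (1:ℝ) 2) :=
      isCompact_Icc.bddAbove_image hcontn.norm.continuousOn
    rwa [Set.image_eq_range] at himg
  have hCb : ∀ x ∈ Set.Icc (1:ℝ) 2, ‖iteratedDeriv n h₀ x‖ ≤ Csup :=
    fun x hx => le_ciSup hbdd ⟨x, hx⟩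
  have hInbound : ‖In‖ ≤ Csup * ∫ t in (1:ℝ)..2, t ^ (s.re + n - 1) := by
    calc ‖In‖ ≤ ∫ x in (1:ℝ)..2, ‖iteratedDeriv n h₀ x * (x:ℂ)^(s-1+n)‖ :=
          intervalIntegral.norm_integral_le_integral_norm one_le_two
      _ ≤ ∫ x in (1:ℝ)..2, Csup * x ^ (s.re + n - 1) := by
          apply intervalIntegral.integral_mono_on one_le_two
          · exact ((hcontn.continuousOn.mul
              (aux_cpow_contOn' (s-1+n) one_pos two_pos)).norm).intervalIntegrable
          · apply ContinuousOn.intervalIntegrable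
            apply continuousOn_const.mul
            apply ContinuousOn.rpow_const continuousOn_id
            intro x hx
            rw [Set.uIcc_of_le (by norm_num : (1:ℝ) ≤ 2)] at hx
            refine Or.inl ?_
            simp only [id_eq]
            intro h
            rw [h] at hx
            exact absurd hx.1 (by norm_num)
          · intro x hx
            rw [norm_mul, Complex.norm_cpow_eq_rpow_re_of_pos (by linarith [hx.1])]
            have hre : (s - 1 + (n:ℂ)).re = s.re + n - 1 := by
              simp [Complex.add_re, Complex.sub_re, Complex.one_re, Complex.natCast_re]
              ring
            rw [hre]
            exact mul_le_mul_of_nonneg_right (hCb x hx)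
              (Real.rpow_nonneg (by linarith [hx.1]) _)
      _ = Csup * ∫ t in (1:ℝ)..2, t ^ (s.re + n - 1) := by
          rw [intervalIntegral.integral_const_mul]
  have hBA : ‖(B:ℂ)^s - (A:ℂ)^s‖
      ≤ ‖s‖ * (Real.log (B/A) * B ^ s.re) := by
    have hsne1 : s - 1 ≠ -1 := fun h => hs0 (by linear_combination h)
    have hderiv : ∀ u ∈ Set.uIcc A B,
        HasDerivAt (fun y : ℝ => (y:ℂ)^(s-1+1) / (s-1+1)) ((u:ℂ)^(s-1)) u := by
      intro u hu
      rw [Set.uIcc_of_le hAB] at hu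
      exact hasDerivAt_ofReal_cpow_const' (ne_of_gt (lt_of_lt_of_le hA hu.1)) hsne1
    have hint : IntervalIntegrable (fun u : ℝ => (u:ℂ)^(s-1)) volume A B :=
      (aux_cpow_contOn' (s-1) hA hB).intervalIntegrable
    have hftc := intervalIntegral.integral_eq_sub_of_hasDerivAt hderiv hint
    rw [sub_add_cancel] at hftc
    have hid : (B:ℂ)^s - (A:ℂ)^s = s * ∫ u in A..B, (u:ℂ)^(s-1) := by
      rw [hftc]
      field_simp
    rw [hid, norm_mul]
    apply mul_le_mul_of_nonneg_left ?_ (norm_nonneg _)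
    calc ‖∫ u in A..B, (u:ℂ)^(s-1)‖ ≤ ∫ u in A..B, ‖(u:ℂ)^(s-1)‖ :=
          intervalIntegral.norm_integral_le_integral_norm hAB
      _ ≤ ∫ u in A..B, B ^ s.re * u⁻¹ := by
          apply intervalIntegral.integral_mono_on hAB
          · exact ((aux_cpow_contOn' (s-1) hA hB).norm).intervalIntegrable
          · apply ContinuousOn.intervalIntegrable
            apply continuousOn_const.mul
            apply ContinuousOn.inv₀ continuousOn_id
            intro x hx
            rw [Set.uIcc_of_le hAB] at hx
            exact ne_of_gt (lt_of_lt_of_le hA hx.1)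
          · intro u hu
            have hu0 : 0 < u := lt_of_lt_of_le hA hu.1
            rw [Complex.norm_cpow_eq_rpow_re_of_pos hu0]
            have hre1 : (s-1).re = s.re - 1 := by simp
            rw [hre1, Real.rpow_sub hu0, Real.rpow_one, div_eq_mul_inv]
            exact mul_le_mul_of_nonneg_right
              (Real.rpow_le_rpow hu0.le hu.2 hs) (inv_nonneg.mpr hu0.le)
      _ = Real.log (B/A) * B ^ s.re := by
          rw [intervalIntegral.integral_const_mul, integral_inv_of_pos hA hB, mul_comm]
  rw [main, norm_mul]
  calc ‖(B:ℂ)^s - (A:ℂ)^s‖ * ‖J‖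
      ≤ (‖s‖ * (Real.log (B/A) * B ^ s.re)) * ‖J‖ :=
        mul_le_mul_of_nonneg_right hBA (norm_nonneg _)
    _ = Real.log (B/A) * B ^ s.re * (‖s‖ * ‖J‖) := by ring
    _ = Real.log (B/A) * B ^ s.re * (‖In‖ / P) := by
        rw [hJval]
        field_simp
    _ ≤ Real.log (B/A) * B ^ s.re * ((Csup * ∫ t in (1:ℝ)..2, t ^ (s.re + n - 1)) / P) := by
        refine mul_le_mul_of_nonneg_left ?_ (mul_nonneg hlog hBp)
        exact div_le_div_of_nonneg_right hInbound hPnn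
    _ = Real.log (B / A) * Csup * B ^ s.re * (∫ t in (1:ℝ)..2, t ^ (s.re + n - 1)) / P := by
        ring
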